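/- arXiv:2001.01357 — 3 statements merged into one kernel-verified Lean document; each statement's English description precedes it below -/
import Mathlib

section
/- Let $(X,\mathcal{B})$ be a measurable space, $\nu$ a finite measure on $X$, $\{p_a\}_{a\in K}$ probability measures with $p_a(B) \le \nu(B)$ for all measurable $B$ and $a \in K$, $w : X \to [0,\infty)$ measurable with $\lim_{M \to \infty} \sup_{a \in K} \int_X w \cdot \mathbf{1}[w \ge M] \, dp_a = 0$, and $f_n, f : X \to \mathbb{R}$ measurable with $f_n \uparrow f$ pointwise and $\sup_n \sup_{x} |f(x) - f_n(x)|/\max(w(x),1) < \infty$. Then $\sup_{a \in K} \int_X (f - f_n) \, dp_a \to 0$ as $n \to \infty$. -/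
open MeasureTheory Filter
open scoped ENNReal

theorem uniform_integral_convergence_majorized {X K : Type*} [MeasurableSpace X]
    (ν : Measure X) [IsFiniteMeasure ν]
    (p : K → Measure X) [∀ a, IsProbabilityMeasure (p a)]
    (hmaj : ∀ a, ∀ B : Set X, MeasurableSet B → p a B ≤ ν B)
    (w : X → ℝ) (hwmeas : Measurable w) (hw0 : ∀ x, 0 ≤ w x)
    (hwint : ∀ a, Integrable w (p a))
    (hui : ∀ ε > (0 : ℝ), ∃ M : ℝ, ∀ a, ∫ x in {x | M ≤ w x}, w x ∂(p a) < ε)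
    (f : ℕ → X → ℝ) (g : X → ℝ)
    (hf : ∀ n, Measurable (f n)) (hg : Measurable g)
    (hmono : ∀ x, Monotone fun n => f n x)
    (hconv : ∀ x, Tendsto (fun n => f n x) atTop (nhds (g x)))
    (C : ℝ) (hC : ∀ n x, |g x - f n x| ≤ C * max (w x) 1) :
    ∀ ε > (0 : ℝ), ∃ N : ℕ, ∀ n ≥ N, ∀ a, ∫ x, (g x - f n x) ∂(p a) < ε := by
  intro ε hε
  set C' : ℝ := max C 1 with hC'def
  have hC'pos : (0:ℝ) < C' := lt_of_lt_of_le one_pos (le_max_right _ _)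
  have hmax0 : ∀ x, (0:ℝ) ≤ max (w x) 1 := fun x => le_trans zero_le_one (le_max_right _ _)
  have hC' : ∀ n x, |g x - f n x| ≤ C' * max (w x) 1 := fun n x =>
    (hC n x).trans (mul_le_mul_of_nonneg_right (le_max_left _ _) (hmax0 x))
  have hle : ∀ n x, f n x ≤ g x := fun n x =>
    Monotone.ge_of_tendsto (hmono x) (hconv x) n
  have hnonneg : ∀ n x, (0:ℝ) ≤ g x - f n x := fun n x => sub_nonneg.2 (hle n x)
  have hint : ∀ n a, Integrable (fun x => g x - f n x) (p a) := by
    intro n a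
    refine Integrable.mono' (((hwint a).const_mul C').add (integrable_const C'))
      ((hg.sub (hf n)).aestronglyMeasurable) (Filter.Eventually.of_forall fun x => ?_)
    have h1 : max (w x) 1 ≤ w x + 1 := max_le (by linarith) (by linarith [hw0 x])
    calc |g x - f n x| ≤ C' * max (w x) 1 := hC' n x
      _ ≤ C' * (w x + 1) := mul_le_mul_of_nonneg_left h1 hC'pos.le
      _ = C' * w x + C' := by ring
  obtain ⟨M₀, hM₀⟩ := hui (ε / (4 * C')) (by positivity)
  set M : ℝ := max M₀ 1 with hMdef
  have hM1 : (1:ℝ) ≤ M := le_max_right _ _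
  have hMpos : (0:ℝ) < M := lt_of_lt_of_le one_pos hM1
  set A : Set X := {x | M ≤ w x} with hAdef
  have hAmeas : MeasurableSet A := measurableSet_le measurable_const hwmeas
  have hMint : ∀ a, ∫ x in A, w x ∂(p a) < ε / (4 * C') := by
    intro a
    refine lt_of_le_of_lt ?_ (hM₀ a)
    exact setIntegral_mono_set (hwint a).integrableOn
      (Filter.Eventually.of_forall fun x => hw0 x)
      (Filter.Eventually.of_forall fun x hx => le_trans (le_max_left _ _) hx)
  obtain ⟨E, hEmeas, hEsmall, hEunif⟩ :=
    tendstoUniformlyOn_of_ae_tendsto' (μ := ν) (fun n => (hf n).stronglyMeasurable)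
      hg.stronglyMeasurable (Filter.Eventually.of_forall hconv)
      (ε := ε / (4 * C' * M)) (by positivity)
  obtain ⟨N, hN⟩ := Filter.eventually_atTop.1
    ((Metric.tendstoUniformlyOn_iff.1 hEunif) (ε / 4) (by positivity))
  refine ⟨N, fun n hn a => ?_⟩
  have hint' := hint n a
  have hAc : MeasurableSet (Aᶜ) := hAmeas.compl
  -- split the integral
  have hsplit1 : ∫ x, (g x - f n x) ∂(p a)
      = ∫ x in A, (g x - f n x) ∂(p a) + ∫ x in Aᶜ, (g x - f n x) ∂(p a) :=
    (integral_add_compl hAmeas hint').symm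
  have hdisj : Disjoint (Aᶜ ∩ E) (Aᶜ ∩ Eᶜ) :=
    Disjoint.mono Set.inter_subset_right Set.inter_subset_right disjoint_compl_right
  have hsplit2 : ∫ x in Aᶜ, (g x - f n x) ∂(p a)
      = ∫ x in Aᶜ ∩ E, (g x - f n x) ∂(p a) + ∫ x in Aᶜ ∩ Eᶜ, (g x - f n x) ∂(p a) := by
    rw [← setIntegral_union hdisj (hAc.inter hEmeas.compl)
      hint'.integrableOn hint'.integrableOn, Set.inter_union_compl]
  -- bound 1
  have hb1 : ∫ x in A, (g x - f n x) ∂(p a) < ε / 4 := by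
    have h1 : ∫ x in A, (g x - f n x) ∂(p a) ≤ ∫ x in A, C' * w x ∂(p a) := by
      refine setIntegral_mono_on hint'.integrableOn
        (((hwint a).const_mul C').integrableOn) hAmeas fun x hx => ?_
      have hwx : (1:ℝ) ≤ w x := le_trans hM1 hx
      calc g x - f n x ≤ |g x - f n x| := le_abs_self _
        _ ≤ C' * max (w x) 1 := hC' n x
        _ = C' * w x := by rw [max_eq_left hwx]
    have h2 : ∫ x in A, C' * w x ∂(p a) = C' * ∫ x in A, w x ∂(p a) := integral_const_mul _ _
    have h3 : C' * ∫ x in A, w x ∂(p a) < C' * (ε / (4 * C')) :=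
      mul_lt_mul_of_pos_left (hMint a) hC'pos
    have h4 : C' * (ε / (4 * C')) = ε / 4 := by field_simp
    linarith
  -- bound 2
  have hb2 : ∫ x in Aᶜ ∩ E, (g x - f n x) ∂(p a) ≤ ε / 4 := by
    have hpt : ∀ x ∈ Aᶜ ∩ E, g x - f n x ≤ C' * M := by
      rintro x ⟨hxA, _⟩
      have hwx : w x < M := lt_of_not_ge hxA
      have : max (w x) 1 ≤ M := max_le hwx.le hM1
      calc g x - f n x ≤ |g x - f n x| := le_abs_self _
        _ ≤ C' * max (w x) 1 := hC' n x
        _ ≤ C' * M := mul_le_mul_of_nonneg_left this hC'pos.le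
    have h1 : ∫ x in Aᶜ ∩ E, (g x - f n x) ∂(p a)
        ≤ ∫ _x in Aᶜ ∩ E, C' * M ∂(p a) :=
      setIntegral_mono_on hint'.integrableOn (integrableOn_const (measure_lt_top _ _).ne)
        (hAc.inter hEmeas) hpt
    have h2 : ∫ _x in Aᶜ ∩ E, C' * M ∂(p a) = ((p a) (Aᶜ ∩ E)).toReal * (C' * M) := by
      rw [setIntegral_const]; rfl
    have hmeas_le : (p a) (Aᶜ ∩ E) ≤ ENNReal.ofReal (ε / (4 * C' * M)) :=
      le_trans (le_trans (measure_mono Set.inter_subset_right) (hmaj a E hEmeas)) hEsmall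
    have h3 : ((p a) (Aᶜ ∩ E)).toReal ≤ ε / (4 * C' * M) :=
      ENNReal.toReal_le_of_le_ofReal (by positivity) hmeas_le
    have h4 : ((p a) (Aᶜ ∩ E)).toReal * (C' * M) ≤ (ε / (4 * C' * M)) * (C' * M) :=
      mul_le_mul_of_nonneg_right h3 (by positivity)
    have h5 : (ε / (4 * C' * M)) * (C' * M) = ε / 4 := by field_simp
    linarith
  -- bound 3
  have hb3 : ∫ x in Aᶜ ∩ Eᶜ, (g x - f n x) ∂(p a) ≤ ε / 4 := by
    have hpt : ∀ x ∈ Aᶜ ∩ Eᶜ, g x - f n x ≤ ε / 4 := by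
      rintro x ⟨_, hxE⟩
      have := hN n hn x hxE
      rw [Real.dist_eq] at this
      exact le_of_lt (lt_of_le_of_lt (le_abs_self _) this)
    have h1 : ∫ x in Aᶜ ∩ Eᶜ, (g x - f n x) ∂(p a)
        ≤ ∫ _x in Aᶜ ∩ Eᶜ, (ε / 4) ∂(p a) :=
      setIntegral_mono_on hint'.integrableOn (integrableOn_const (measure_lt_top _ _).ne)
        (hAc.inter hEmeas.compl) hpt
    have h2 : ∫ _x in Aᶜ ∩ Eᶜ, (ε / 4) ∂(p a) = ((p a) (Aᶜ ∩ Eᶜ)).toReal * (ε / 4) := by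
      rw [setIntegral_const]; rfl
    have h3 : ((p a) (Aᶜ ∩ Eᶜ)).toReal ≤ 1 := by
      have := prob_le_one (μ := p a) (s := Aᶜ ∩ Eᶜ)
      simpa using ENNReal.toReal_le_of_le_ofReal one_pos.le (by simpa using this)
    nlinarith [h3, hε.le]
  linarith [hb1, hb2, hb3, hsplit1, hsplit2]
end

section
/- Let $Y$ be a metric space and $\{f_n\}$ a sequence of functions $f_n : Y \to \mathbb{R} \cup \{+\infty\}$ such that $L := \liminf_{n\to\infty} \inf_{y\in Y} f_n(y)$ is finite. Suppose $L = \inf_{y\in Y} (\underline{\mathrm{e\text{-}lim}}_n f_n)(y)$, where $\underline{\mathrm{e\text{-}lim}}_n f_n$ is the lower epi-limit of $\{f_n\}$, defined by $(\underline{\mathrm{e\text{-}lim}}_n f_n)(y) := \inf\{ r \in \mathbb{R} \mid \exists \text{ subsequence } \{n_k\} \text{ and points } y_k \to y \text{ with } \limsup_k f_{n_k}(y_k) \le r \}$ (with value $+\infty$ if no such $r$ exists). Then for every $\epsilon > 0$ there exist a compact set $K \subset Y$ and a subsequence $\{f_{n_j}\}$ such that $\inf_{y\in K} f_{n_j}(y)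 \le \inf_{y\in Y} f_{n_j}(y) + \epsilon$ for all sufficiently large $j$. -/
open Filter

/-- The lower epi-limit of a sequence of extended-real-valued functions, defined as
`inf { r ∈ ℝ | ∃ subsequence n_k and points y_k → y with limsup_k f_{n_k}(y_k) ≤ r }`,
with value `+∞` if no such `r` exists. -/
noncomputable def lowerEpiLim {Y : Type*} [MetricSpace Y] (f : ℕ → Y → EReal) (y : Y) : EReal :=
  sInf {s : EReal | ∃ r : ℝ, s = (r : EReal) ∧ ∃ φ : ℕ → ℕ, StrictMono φ ∧
    ∃ yk : ℕ → Y, Tendsto yk atTop (nhds y) ∧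
      limsup (fun k => f (φ k) (yk k)) atTop ≤ (r : EReal)}

theorem epi_lim_inf_implies_compact_near_minimizers {Y : Type*} [MetricSpace Y]
    (f : ℕ → Y → EReal) (hbot : ∀ n y, f n y ≠ ⊥) (L : ℝ)
    (hL : liminf (fun n => ⨅ y, f n y) atTop = (L : EReal))
    (heq : (⨅ y, lowerEpiLim f y) = (L : EReal)) :
    ∀ ε : ℝ, 0 < ε → ∃ K : Set Y, IsCompact K ∧ ∃ φ : ℕ → ℕ, StrictMono φ ∧
      ∃ J : ℕ, ∀ j ≥ J, (⨅ y ∈ K, f (φ j) y) ≤ (⨅ y, f (φ j) y) + (ε : EReal) := by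
  intro ε hε
  -- find y with lowerEpiLim f y < L + ε/2
  have h1 : (⨅ y, lowerEpiLim f y) < ((L + ε/2 : ℝ) : EReal) := by
    rw [heq]; exact_mod_cast by linarith
  obtain ⟨y, hy⟩ := iInf_lt_iff.mp h1
  obtain ⟨s, hs_mem, hs_lt⟩ := sInf_lt_iff.mp hy
  obtain ⟨r, rfl, φ, hφ, yk, hyk, hlimsup⟩ := hs_mem
  have hr : r < L + ε/2 := by exact_mod_cast hs_lt
  refine ⟨insert y (Set.range yk), hyk.isCompact_insert_range, φ, hφ, ?_⟩
  -- eventually f (φ k) (yk k) < r + ε/4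
  have h2 : ∀ᶠ k in atTop, f (φ k) (yk k) < ((r + ε/4 : ℝ) : EReal) :=
    eventually_lt_of_limsup_lt (lt_of_le_of_lt hlimsup (by exact_mod_cast by linarith))
  -- eventually L - ε/4 < inf f n
  have h3 : ∀ᶠ n in atTop, ((L - ε/4 : ℝ) : EReal) < ⨅ z, f n z := by
    refine eventually_lt_of_lt_liminf ?_ (by isBoundedDefault)
    rw [hL]; exact_mod_cast by linarith
  have h3' : ∀ᶠ k in atTop, ((L - ε/4 : ℝ) : EReal) < ⨅ z, f (φ k) z :=
    (hφ.tendsto_atTop).eventually h3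
  obtain ⟨J, hJ⟩ := (h2.and h3').exists_forall_of_atTop
  refine ⟨J, fun j hj => ?_⟩
  obtain ⟨hj2, hj3⟩ := hJ j hj
  have hmem : yk j ∈ insert y (Set.range yk) := Set.mem_insert_iff.2 (Or.inr ⟨j, rfl⟩)
  have step1 : (⨅ z ∈ insert y (Set.range yk), f (φ j) z) ≤ f (φ j) (yk j) :=
    iInf₂_le _ hmem
  have step2 : ((r + ε/4 : ℝ) : EReal) ≤ ((L - ε/4 : ℝ) : EReal) + (ε : EReal) := by
    rw [← EReal.coe_add]; exact_mod_cast by linarith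
  have step3 : ((L - ε/4 : ℝ) : EReal) + (ε : EReal) ≤ (⨅ z, f (φ j) z) + (ε : EReal) :=
    add_le_add_left hj3.le _
  exact step1.trans (hj2.le.trans (step2.trans step3))
end

section
/- Let $X$ be a measurable space, $\nu$ a finite measure on $X$, and $(p_k)_{k\ge1}$ a sequence of probability measures on $X$ with $p_k(B) \le \nu(B)$ for every measurable set $B$ and all $k$. If $X$ has countably generated $\sigma$-algebra, then there exist a subsequence $(p_{k_j})$ and a probability measure $\bar{p}$ on $X$ such that $p_{k_j}(B) \to \bar{p}(B)$ for every measurable set $B$. -/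
open MeasureTheory Filter
open scoped ENNReal symmDiff

private lemma dist_toReal_measure_le {X : Type*} [MeasurableSpace X] (μ : Measure X)
    [IsFiniteMeasure μ] (B t : Set X) :
    dist (μ B).toReal (μ t).toReal ≤ (μ (B ∆ t)).toReal := by
  have hsub : ∀ s u : Set X, μ s ≤ μ u + μ (s ∆ u) := by
    intro s u
    refine (measure_mono ?_).trans (measure_union_le _ _)
    intro x hx
    by_cases h : x ∈ u
    · exact Or.inl h
    · exact Or.inr (by rw [Set.symmDiff_def]; exact Or.inl ⟨hx, h⟩)
  have hBt := hsub B t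
  have htB := hsub t B
  rw [symmDiff_comm] at htB
  have h1 : (μ B).toReal ≤ (μ t).toReal + (μ (B ∆ t)).toReal := by
    rw [← ENNReal.toReal_add (measure_ne_top μ t) (measure_ne_top μ (B ∆ t))]
    exact ENNReal.toReal_mono (by finiteness) hBt
  have h2 : (μ t).toReal ≤ (μ B).toReal + (μ (B ∆ t)).toReal := by
    rw [← ENNReal.toReal_add (measure_ne_top μ B) (measure_ne_top μ (B ∆ t))]
    exact ENNReal.toReal_mono (by finiteness) htB
  rw [Real.dist_eq, abs_sub_le_iff]
  constructor <;> linarith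

theorem setwise_compactness_of_majorized {X : Type*} [MeasurableSpace X]
    [MeasurableSpace.CountablyGenerated X]
    (ν : Measure X) [IsFiniteMeasure ν]
    (p : ℕ → Measure X) [∀ k, IsProbabilityMeasure (p k)]
    (hmaj : ∀ k, ∀ B : Set X, MeasurableSet B → p k B ≤ ν B) :
    ∃ φ : ℕ → ℕ, StrictMono φ ∧ ∃ q : Measure X, IsProbabilityMeasure q ∧
      ∀ B : Set X, MeasurableSet B →
        Tendsto (fun j => p (φ j) B) atTop (nhds (q B)) := by
  have hsep : IsSeparable ν := isSeparable_of_sigmaFinite ν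
  obtain ⟨𝒜, h𝒜c, h𝒜⟩ := hsep.exists_countable_measureDense
  obtain ⟨e, he⟩ := h𝒜c.exists_eq_range h𝒜.nonempty
  obtain ⟨L, φ, hφ, hL⟩ := CompactSpace.tendsto_subseq (X := ℕ → ℝ≥0∞)
      (fun k n => p k (e n))
  have hLn : ∀ n, Tendsto (fun j => p (φ j) (e n)) atTop (nhds (L n)) :=
    fun n => (tendsto_pi_nhds.1 hL) n
  -- every measurable set's measures converge along φ
  have key : ∀ B : Set X, MeasurableSet B →
      ∃ l : ℝ≥0∞, Tendsto (fun j => p (φ j) B) atTop (nhds l) := by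
    intro B hB
    have hcauchy : CauchySeq (fun j => (p (φ j) B).toReal) := by
      rw [Metric.cauchySeq_iff]
      intro ε hε
      obtain ⟨t, ht𝒜, ht⟩ := h𝒜.approx B hB (measure_ne_top ν B) (ε / 3)
        (by linarith)
      obtain ⟨n, rfl⟩ : ∃ n, e n = t := by
        rw [he] at ht𝒜; exact ht𝒜.imp fun n h => h
      have hLne : L n ≠ ∞ := by
        refine ne_top_of_le_ne_top (by norm_num : (1 : ℝ≥0∞) ≠ ∞) ?_
        exact le_of_tendsto (hLn n) (Eventually.of_forall fun j => prob_le_one)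
      have htendsto : Tendsto (fun j => (p (φ j) (e n)).toReal) atTop
          (nhds (L n).toReal) :=
        (ENNReal.tendsto_toReal hLne).comp (hLn n)
      obtain ⟨N, hN⟩ := Metric.cauchySeq_iff.1 htendsto.cauchySeq (ε / 3)
        (by linarith)
      refine ⟨N, fun a ha b hb => ?_⟩
      have hd : ∀ k, dist (p k B).toReal (p k (e n)).toReal < ε / 3 := by
        intro k
        refine lt_of_le_of_lt (dist_toReal_measure_le (p k) B (e n)) ?_
        have hlt' : p k (B ∆ e n) < ENNReal.ofReal (ε / 3) :=
          lt_of_le_of_lt (hmaj k _ (hB.symmDiff (h𝒜.measurable _ ht𝒜))) ht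
        calc (p k (B ∆ e n)).toReal
            < (ENNReal.ofReal (ε / 3)).toReal :=
              ENNReal.toReal_strict_mono ENNReal.ofReal_ne_top hlt'
          _ = ε / 3 := ENNReal.toReal_ofReal (by linarith)
      calc dist (p (φ a) B).toReal (p (φ b) B).toReal
          ≤ dist (p (φ a) B).toReal (p (φ a) (e n)).toReal
            + dist (p (φ a) (e n)).toReal (p (φ b) (e n)).toReal
            + dist (p (φ b) (e n)).toReal (p (φ b) B).toReal :=
            dist_triangle4 _ _ _ _
        _ < ε / 3 + ε / 3 + ε / 3 := by
            refine add_lt_add (add_lt_add (hd (φ a)) (hN a ha b hb)) ?_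
            rw [dist_comm]; exact hd (φ b)
        _ = ε := by ring
    obtain ⟨r, hr⟩ := cauchySeq_tendsto_of_complete hcauchy
    refine ⟨ENNReal.ofReal r, ?_⟩
    have : Tendsto (fun j => ENNReal.ofReal (p (φ j) B).toReal) atTop
        (nhds (ENNReal.ofReal r)) := (ENNReal.continuous_ofReal.tendsto r).comp hr
    simpa only [ENNReal.ofReal_toReal (measure_ne_top _ _)] using this
  choose! l hlt using key
  -- the limit is a measure
  have h0 : l ∅ = 0 :=
    tendsto_nhds_unique (hlt ∅ MeasurableSet.empty) (by simp)
  have hadd : ∀ (f : ℕ → Set X), (∀ i, MeasurableSet (f i)) →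
      Pairwise (Function.onFun Disjoint f) → l (⋃ i, f i) = ∑' i, l (f i) := by
    intro f hm hd
    have hU : MeasurableSet (⋃ i, f i) := MeasurableSet.iUnion hm
    have hsum : ∀ (k : ℕ) (s : Finset ℕ),
        ∑ i ∈ s, p k (f i) = p k (⋃ i ∈ s, f i) :=
      fun k s => (measure_biUnion_finset (fun i _ j _ hij => hd hij)
        (fun i _ => hm i)).symm
    refine le_antisymm ?_ ?_
    · -- l (⋃ f) ≤ ∑' l (f i)
      have hνsum : ∑' i, ν (f i) ≠ ∞ := by
        rw [← measure_iUnion hd hm]; exact measure_ne_top ν _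
      have htail : Tendsto (fun N => ν (⋃ i, f (i + N))) atTop (nhds 0) := by
        refine tendsto_of_tendsto_of_tendsto_of_le_of_le tendsto_const_nhds
          (ENNReal.tendsto_sum_nat_add (fun i => ν (f i)) hνsum)
          (fun _ => zero_le) (fun N => measure_iUnion_le _)
      have hbound : ∀ N, l (⋃ i, f i) ≤
          (∑ i ∈ Finset.range N, l (f i)) + ν (⋃ i, f (i + N)) := by
        intro N
        refine le_of_tendsto_of_tendsto' (hlt _ hU)
          (Tendsto.add (tendsto_finset_sum _ fun i _ => hlt _ (hm i))
            tendsto_const_nhds) (fun j => ?_)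
        have hsubset : (⋃ i, f i) ⊆ (⋃ i ∈ Finset.range N, f i) ∪ ⋃ i, f (i + N) := by
          intro x hx
          obtain ⟨i, hi⟩ := Set.mem_iUnion.1 hx
          rcases lt_or_ge i N with h | h
          · exact Or.inl (Set.mem_biUnion (Finset.mem_range.2 h) hi)
          · exact Or.inr (Set.mem_iUnion.2 ⟨i - N, by rwa [Nat.sub_add_cancel h]⟩)
        calc p (φ j) (⋃ i, f i)
            ≤ p (φ j) ((⋃ i ∈ Finset.range N, f i) ∪ ⋃ i, f (i + N)) :=
              measure_mono hsubset
          _ ≤ p (φ j) (⋃ i ∈ Finset.range N, f i) + p (φ j) (⋃ i, f (i + N)) :=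
              measure_union_le _ _
          _ ≤ (∑ i ∈ Finset.range N, p (φ j) (f i)) + ν (⋃ i, f (i + N)) := by
              rw [hsum]
              exact add_le_add le_rfl (hmaj _ _ (MeasurableSet.iUnion fun i => hm _))
      have hlim : Tendsto (fun N => (∑ i ∈ Finset.range N, l (f i))
          + ν (⋃ i, f (i + N))) atTop (nhds ((∑' i, l (f i)) + 0)) :=
        Tendsto.add (ENNReal.tendsto_nat_tsum _) htail
      rw [add_zero] at hlim
      exact ge_of_tendsto' hlim hbound
    · -- ∑' l (f i) ≤ l (⋃ f)
      rw [ENNReal.tsum_eq_iSup_sum]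
      refine iSup_le fun s => ?_
      refine le_of_tendsto_of_tendsto' (tendsto_finset_sum _ fun i _ => hlt _ (hm i))
        (hlt _ hU) (fun j => ?_)
      rw [hsum]
      exact measure_mono (Set.iUnion₂_subset fun i _ => Set.subset_iUnion f i)
  refine ⟨φ, hφ, Measure.ofMeasurable (fun B _ => l B) h0 hadd, ?_, ?_⟩
  · constructor
    rw [Measure.ofMeasurable_apply _ MeasurableSet.univ]
    refine tendsto_nhds_unique (hlt _ MeasurableSet.univ) ?_
    simp [measure_univ]
  · intro B hB
    rw [Measure.ofMeasurable_apply _ hB]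
    exact hlt B hB
end
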